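/- For 1 < s < c_p²/c_s², the complex quantity R(s) = (s−2)² + 4i(s−1)^{1/2}(1−c_s²c_p⁻²s)^{1/2} is nonzero. -/
import Mathlib

/-- In the mixed region `1 < s < c_p²/c_s²`, the Rayleigh function
`R(s) = (s−2)² + 4i√(s−1)√(1−c_s²c_p⁻²s)` does not vanish. -/
theorem stmt_9 (cs cp s : ℝ) (hcs : 0 < cs) (hcscp : cs < cp)
    (hs1 : 1 < s) (hs2 : s < cp ^ 2 / cs ^ 2) :
    ((s - 2 : ℝ) : ℂ) ^ 2
      + 4 * Complex.I
        * ((Real.sqrt (s - 1) * Real.sqrt (1 - cs ^ 2 / cp ^ 2 * s) : ℝ) : ℂ) ≠ 0 := by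
  have hcp : 0 < cp := hcs.trans hcscp
  have h1 : 0 < Real.sqrt (s - 1) := Real.sqrt_pos.mpr (by linarith)
  have h2 : 0 < Real.sqrt (1 - cs ^ 2 / cp ^ 2 * s) := by
    apply Real.sqrt_pos.mpr
    have hcs2 : (0:ℝ) < cs ^ 2 := by positivity
    have hs2' : s * cs ^ 2 < cp ^ 2 := by
      rw [lt_div_iff₀ hcs2] at hs2; linarith
    have : cs ^ 2 / cp ^ 2 * s < 1 := by
      rw [div_mul_eq_mul_div, div_lt_one (by positivity)]
      linarith
    linarith
  intro h
  have := congrArg Complex.im h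
  simp [Complex.ext_iff, pow_two] at this
  rcases this with h' | h'
  · linarith
  · rw [show cs * cs / (cp * cp) = cs ^ 2 / cp ^ 2 by ring] at h'
    linarith
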